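/- Let G be a finite simple graph with n vertices and let v : V(G) → ℝⁿ be a faithful and linearly independent orthogonal co-representation of G. If C₁ and C₂ are distinct maximal cliques of G, then the orthogonal projection onto (span{v_i : i ∈ C₁})^⊥ and the orthogonal projection onto (span{v_i : i ∈ C₂})^⊥ do not commute. -/

import Mathlib

open RealInnerProductSpace

/-- A maximal clique of a simple graph, as a finite set of vertices. -/
def IsMaxClique {V : Type*} (G : SimpleGraph V) (C : Finset V) : Prop :=
  G.IsClique (C : Set V) ∧ ∀ D : Finset V, G.IsClique (D : Set V) → C ⊆ D → D = C

/-- The orthogonal projection onto a subspace `K` of `ℝⁿ`, as an endomorphism of `ℝⁿ`. -/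
noncomputable def projOnto {n : ℕ} (K : Submodule ℝ (EuclideanSpace ℝ (Fin n))) :
    EuclideanSpace ℝ (Fin n) →L[ℝ] EuclideanSpace ℝ (Fin n) :=
  K.subtypeL.comp (K.orthogonalProjection)

lemma span_image_inter_le {ι E : Type*} [AddCommGroup E] [Module ℝ E] {v : ι → E}
    (hli : LinearIndependent ℝ v) (s t : Set ι) :
    Submodule.span ℝ (v '' s) ⊓ Submodule.span ℝ (v '' t) ≤
      Submodule.span ℝ (v '' (s ∩ t)) := by
  rintro x ⟨hxs, hxt⟩
  have hdecomp : Submodule.span ℝ (v '' s) =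
      Submodule.span ℝ (v '' (s ∩ t)) ⊔ Submodule.span ℝ (v '' (s \ t)) := by
    rw [← Submodule.span_union, ← Set.image_union, Set.inter_union_diff]
  rw [hdecomp] at hxs
  obtain ⟨a, ha, b, hb, rfl⟩ := Submodule.mem_sup.mp hxs
  have hat : a ∈ Submodule.span ℝ (v '' t) :=
    Submodule.span_mono (Set.image_mono Set.inter_subset_right) ha
  have hbt : b ∈ Submodule.span ℝ (v '' t) := by
    rw [← add_sub_cancel_left a b]; exact Submodule.sub_mem _ hxt hat
  have hb0 : b = 0 := by
    have hd := hli.disjoint_span_image (s := s \ t) (t := t) Set.disjoint_sdiff_left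
    exact (Submodule.disjoint_def.mp hd) b hb hbt
  simpa [hb0] using ha

lemma projOnto_orthogonal_eq {n : ℕ} (K : Submodule ℝ (EuclideanSpace ℝ (Fin n))) :
    projOnto Kᗮ = 1 - projOnto K := by
  ext x
  simp [projOnto, Submodule.starProjection_orthogonal_val]

/-- Let `v` be a faithful and linearly independent orthogonal co-representation in `ℝⁿ`
of a finite simple graph `G` with `n` vertices. If `C₁` and `C₂` are distinct maximal
cliques of `G`, then the orthogonal projections onto `(span {v i : i ∈ C₁})ᗮ` and onto
`(span {v i : i ∈ C₂})ᗮ` do not commute. -/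
theorem projOnto_distinct_maxCliques_not_commute
    {V : Type*} [Fintype V] {n : ℕ} (hn : Fintype.card V = n)
    (G : SimpleGraph V) (v : V → EuclideanSpace ℝ (Fin n))
    (hinj : Function.Injective v) (hunit : ∀ i, ‖v i‖ = 1)
    (hli : LinearIndependent ℝ v)
    (hfaith : ∀ i j : V, i ≠ j → (G.Adj i j ↔ ⟪v i, v j⟫ = 0))
    (C₁ C₂ : Finset V) (hC₁ : IsMaxClique G C₁) (hC₂ : IsMaxClique G C₂)
    (hne : C₁ ≠ C₂) :
    ¬ Commute (projOnto ((Submodule.span ℝ (v '' (C₁ : Set V)))ᗮ))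
        (projOnto ((Submodule.span ℝ (v '' (C₂ : Set V)))ᗮ)) := by
  intro hcomm
  classical
  set S₁ := Submodule.span ℝ (v '' (C₁ : Set V)) with hS₁
  set S₂ := Submodule.span ℝ (v '' (C₂ : Set V)) with hS₂
  rw [projOnto_orthogonal_eq, projOnto_orthogonal_eq] at hcomm
  -- deduce that the projections onto S₁ and S₂ commute
  have h12 : Commute (projOnto S₁) (projOnto S₂) := by
    have h1 : Commute (1 - (1 - projOnto S₁)) (1 - projOnto S₂) :=
      (Commute.one_left _).sub_left hcomm
    have h2 : Commute (1 - (1 - projOnto S₁)) (1 - (1 - projOnto S₂)) :=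
      (Commute.one_right _).sub_right h1
    simpa using h2
  -- choose i ∈ C₁ \ C₂
  have hsub : ¬ C₁ ⊆ C₂ := fun h => hne (hC₁.2 C₂ hC₂.1 h).symm
  obtain ⟨i, hiC₁, hiC₂⟩ := Finset.not_subset.mp hsub
  -- choose j ∈ C₂ not adjacent to i
  obtain ⟨j, hjC₂, hadj⟩ : ∃ j ∈ C₂, ¬ G.Adj i j := by
    by_contra h
    push_neg at h
    have hclique : G.IsClique (insert i (C₂ : Set V)) :=
      hC₂.1.insert fun b hb _ => h b hb
    have := hC₂.2 (insert i C₂) (by simpa using hclique) (Finset.subset_insert _ _)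
    exact hiC₂ (this ▸ Finset.mem_insert_self i C₂)
  have hij : i ≠ j := fun h => hiC₂ (h ▸ hjC₂)
  have hinner : ⟪v i, v j⟫ ≠ 0 := fun h => hadj ((hfaith i j hij).mpr h)
  -- the vector x = P₁ (v j)
  set x : EuclideanSpace ℝ (Fin n) := projOnto S₁ (v j) with hx
  have hvjS₂ : v j ∈ S₂ := Submodule.subset_span ⟨j, hjC₂, rfl⟩
  have hviS₁ : v i ∈ S₁ := Submodule.subset_span ⟨i, hiC₁, rfl⟩
  have hx1 : x ∈ S₁ := by
    simp only [hx, projOnto, ContinuousLinearMap.comp_apply, Submodule.subtypeL_apply]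
    exact (S₁.orthogonalProjectionOnto (v j)).2
  have hP₂vj : projOnto S₂ (v j) = v j := by
    simp only [projOnto, ContinuousLinearMap.comp_apply, Submodule.subtypeL_apply]
    exact Submodule.starProjection_eq_self_iff.mpr hvjS₂
  have hx2 : x ∈ S₂ := by
    have : x = projOnto S₂ (projOnto S₁ (v j)) := by
      conv_lhs => rw [hx, ← hP₂vj]
      have := congrFun (congrArg DFunLike.coe h12.eq) (v j)
      simpa [ContinuousLinearMap.mul_apply] using this
    rw [this]
    simp only [projOnto, ContinuousLinearMap.comp_apply, Submodule.subtypeL_apply]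
    exact (S₂.orthogonalProjectionOnto _).2
  -- hence x lies in the span of v '' (C₁ ∩ C₂), which is orthogonal to v i
  have hxint : x ∈ Submodule.span ℝ (v '' ((C₁ : Set V) ∩ (C₂ : Set V))) :=
    span_image_inter_le hli _ _ ⟨hx1, hx2⟩
  have hxperp : ⟪v i, x⟫ = 0 := by
    have hle : Submodule.span ℝ (v '' ((C₁ : Set V) ∩ (C₂ : Set V))) ≤ (ℝ ∙ (v i))ᗮ := by
      rw [Submodule.span_le]
      rintro _ ⟨k, ⟨hk₁, hk₂⟩, rfl⟩
      rw [SetLike.mem_coe, Submodule.mem_orthogonal_singleton_iff_inner_left]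
      have hki : k ≠ i := fun h => hiC₂ (h ▸ hk₂)
      have hadjik : G.Adj i k := hC₁.1 hiC₁ hk₁ (Ne.symm hki)
      have := (hfaith i k (Ne.symm hki)).mp hadjik
      rwa [real_inner_comm] at this
    have := hle hxint
    rw [Submodule.mem_orthogonal_singleton_iff_inner_left] at this
    rwa [real_inner_comm] at this
  -- but ⟪v i, x⟫ = ⟪v i, v j⟫ ≠ 0
  have hkey : ⟪v i, x⟫ = ⟪v i, v j⟫ := by
    rw [hx]
    simp only [projOnto, ContinuousLinearMap.comp_apply, Submodule.subtypeL_apply]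
    rw [real_inner_comm]
    change ⟪S₁.starProjection (v j), v i⟫ = _
    rw [Submodule.inner_starProjection_left_eq_right,
      Submodule.starProjection_eq_self_iff.mpr hviS₁, real_inner_comm]
  exact hinner (hkey ▸ hxperp)
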